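/- Let m be an odd positive integer and let a(X), b(X) ∈ R_m. Consider the R_m-module homomorphism γ_{a,b} : R_m → R_m × R'_m defined by γ_{a,b}(f(X)) = (f(X)a(X), 2(f(X)b(X))). Then the kernel of γ_{a,b} is the ideal of R_m generated by h_{a,b}(X) = (X^m − 1)/gcd(a(X), b(X), X^m − 1). -/

import Mathlib

open Polynomial

noncomputable section

/-- The polynomial `X^m - 1` over `Z/2`. -/
def fm (m : ℕ) : Polynomial (ZMod 2) := X ^ m - 1

/-- The polynomial `X^m - 1` over `Z/4`. -/
def fm4 (m : ℕ) : Polynomial (ZMod 4) := X ^ m - 1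

/-- `R_m = (Z/2)[X]/⟨X^m - 1⟩`. -/
abbrev R2 (m : ℕ) : Type := Polynomial (ZMod 2) ⧸ Ideal.span {fm m}

/-- `R'_m = (Z/4)[X]/⟨X^m - 1⟩`. -/
abbrev R4 (m : ℕ) : Type := Polynomial (ZMod 4) ⧸ Ideal.span {fm4 m}

def mk2 (m : ℕ) : Polynomial (ZMod 2) →+* R2 m := Ideal.Quotient.mk _

def mk4 (m : ℕ) : Polynomial (ZMod 4) →+* R4 m := Ideal.Quotient.mk _

/-- The canonical representative (of degree `< m`) of an element of `R2 m`. -/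
def rep2 (m : ℕ) (r : R2 m) : Polynomial (ZMod 2) :=
  (Function.surjInv (Ideal.Quotient.mk_surjective (I := Ideal.span {fm m})) r) %ₘ fm m

/-- Coefficientwise doubling map `(Z/2)[X] → (Z/4)[X]`, `a ↦ 2a` on each coefficient. -/
def polyDbl (p : Polynomial (ZMod 2)) : Polynomial (ZMod 4) :=
  ∑ i ∈ p.support, Polynomial.C (2 * ((p.coeff i).val : ZMod 4)) * X ^ i

/-- The additive embedding `R_m → R'_m`, `f ↦ 2f`. -/
def iota (m : ℕ) (r : R2 m) : R4 m := mk4 m (polyDbl (rep2 m r))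

lemma fm_monic (m : ℕ) (hm : 0 < m) : (fm m).Monic := by
  have : fm m = X ^ m - C 1 := by simp [fm]
  rw [this]; exact monic_X_pow_sub_C 1 hm.ne'

lemma fm_deg (m : ℕ) (hm : 0 < m) : (fm m).degree = m := by
  have : fm m = X ^ m - C 1 := by simp [fm]
  rw [this]; exact degree_X_pow_sub_C hm 1

lemma fm4_monic (m : ℕ) (hm : 0 < m) : (fm4 m).Monic := by
  have : fm4 m = X ^ m - C 1 := by simp [fm4]
  rw [this]; exact monic_X_pow_sub_C 1 hm.ne'

lemma fm4_deg (m : ℕ) (hm : 0 < m) : (fm4 m).degree = m := by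
  haveI : Nontrivial (ZMod 4) := ⟨0, 1, by decide⟩
  have : fm4 m = X ^ m - C 1 := by simp [fm4]
  rw [this]; exact degree_X_pow_sub_C hm 1

lemma coeff_polyDbl (p : Polynomial (ZMod 2)) (n : ℕ) :
    (polyDbl p).coeff n = 2 * ((p.coeff n).val : ZMod 4) := by
  rw [polyDbl, finset_sum_coeff]
  simp only [coeff_C_mul, coeff_X_pow]
  by_cases h : n ∈ p.support
  · rw [Finset.sum_eq_single n]
    · simp
    · intro i _ hi; simp [Ne.symm hi]
    · intro h'; exact absurd h h'
  · rw [Finset.sum_eq_zero]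
    · have : p.coeff n = 0 := notMem_support_iff.mp h
      simp [this]
    · intro i hi
      by_cases hin : i = n
      · subst hin; exact absurd hi h
      · simp [Ne.symm hin]

lemma polyDbl_eq_zero (p : Polynomial (ZMod 2)) (h : polyDbl p = 0) : p = 0 := by
  ext n
  have := congrArg (fun q => Polynomial.coeff q n) h
  simp only [coeff_polyDbl, coeff_zero] at this
  have hv : (p.coeff n).val = 0 ∨ (p.coeff n).val = 1 := by
    have := (p.coeff n).val_lt
    omega
  rcases hv with hv | hv
  · rw [ZMod.val_eq_zero] at hv
    exact hv
  · rw [hv] at this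
    norm_num at this
    exact absurd this (by decide)

lemma degree_polyDbl_le (p : Polynomial (ZMod 2)) : (polyDbl p).degree ≤ p.degree := by
  rw [degree_le_iff_coeff_zero]
  intro k hk
  have : p.coeff k = 0 := coeff_eq_zero_of_degree_lt hk
  simp [coeff_polyDbl, this]

lemma mk2_rep2 (m : ℕ) (hm : 0 < m) (r : R2 m) : mk2 m (rep2 m r) = r := by
  have hs : mk2 m (Function.surjInv (Ideal.Quotient.mk_surjective (I := Ideal.span {fm m})) r) = r :=
    Function.surjInv_eq _ r
  rw [rep2, modByMonic_eq_sub_mul_div _ (fm m), map_sub, hs, map_mul]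
  have : mk2 m (fm m) = 0 := Ideal.Quotient.eq_zero_iff_mem.mpr (Ideal.subset_span rfl)
  rw [this, zero_mul, sub_zero]

lemma degree_rep2_lt (m : ℕ) (hm : 0 < m) (r : R2 m) : (rep2 m r).degree < m := by
  have := degree_modByMonic_lt (Function.surjInv (Ideal.Quotient.mk_surjective (I := Ideal.span {fm m})) r) (fm_monic m hm)
  rwa [fm_deg m hm] at this

lemma iota_eq_zero_iff (m : ℕ) (hm : 0 < m) (r : R2 m) : iota m r = 0 ↔ r = 0 := by
  constructor
  · intro h
    have hdvd : fm4 m ∣ polyDbl (rep2 m r) := by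
      rw [iota, mk4] at h
      exact (Ideal.mem_span_singleton).mp (Ideal.Quotient.eq_zero_iff_mem.mp h)
    have hdeg : (polyDbl (rep2 m r)).degree < (fm4 m).degree := by
      calc (polyDbl (rep2 m r)).degree ≤ (rep2 m r).degree := degree_polyDbl_le _
        _ < m := degree_rep2_lt m hm r
        _ = (fm4 m).degree := (fm4_deg m hm).symm
    have h0 : polyDbl (rep2 m r) = 0 := by
      obtain ⟨c, hc⟩ := hdvd
      by_cases hc0 : c = 0
      · rw [hc, hc0, mul_zero]
      · exfalso
        rw [hc, (fm4_monic m hm).degree_mul_comm c, (fm4_monic m hm).degree_mul] at hdeg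
        exact absurd hdeg (not_lt.mpr (le_add_of_nonneg_left (zero_le_degree_iff.mpr hc0)))
    have := polyDbl_eq_zero _ h0
    rw [← mk2_rep2 m hm r, this, map_zero]
  · intro h
    subst h
    have h0 : rep2 m (0 : R2 m) = 0 := by
      have := degree_rep2_lt m hm (0 : R2 m)
      by_contra hne
      have := mk2_rep2 m hm (0 : R2 m)
      have hmem : rep2 m (0 : R2 m) ∈ Ideal.span {fm m} :=
        Ideal.Quotient.eq_zero_iff_mem.mp this
      have hdvd := Ideal.mem_span_singleton.mp hmem
      have := eq_zero_of_dvd_of_degree_lt hdvd (by rwa [fm_deg m hm])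
      exact hne this
    rw [iota, h0]
    simp [polyDbl, map_zero]

lemma mk2_eq_zero_iff (m : ℕ) (p : Polynomial (ZMod 2)) :
    mk2 m p = 0 ↔ fm m ∣ p := by
  rw [mk2, Ideal.Quotient.eq_zero_iff_mem, Ideal.mem_span_singleton]

/-- The kernel of the `R_m`-module homomorphism
`γ_{a,b} : f ↦ (f·a, 2(f·b))` is the ideal of `R_m` generated by
`h_{a,b} = (X^m-1)/gcd(A, B, X^m-1)`. -/
theorem statement1 (m : ℕ) (hm : Odd m) (hmpos : 0 < m)
    (A B : Polynomial (ZMod 2)) :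
    {f : R2 m | (f * mk2 m A, iota m (f * mk2 m B)) = (0 : R2 m × R4 m)}
      = (↑(Ideal.span {mk2 m (fm m / EuclideanDomain.gcd A (EuclideanDomain.gcd B (fm m)))} :
          Ideal (R2 m)) : Set (R2 m)) := by
  classical
  set g := EuclideanDomain.gcd A (EuclideanDomain.gcd B (fm m)) with hgdef
  set h := fm m / g with hhdef
  have hfm0 : fm m ≠ 0 := (fm_monic m hmpos).ne_zero
  have hg1 : g ∣ EuclideanDomain.gcd B (fm m) := EuclideanDomain.gcd_dvd_right _ _
  have hgfm : g ∣ fm m := hg1.trans (EuclideanDomain.gcd_dvd_right _ _)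
  have hgA : g ∣ A := EuclideanDomain.gcd_dvd_left _ _
  have hgB : g ∣ B := hg1.trans (EuclideanDomain.gcd_dvd_left _ _)
  have hg0 : g ≠ 0 := by
    intro h0
    rw [h0] at hgfm
    exact hfm0 (zero_dvd_iff.mp hgfm)
  have hfm_eq : g * h = fm m := EuclideanDomain.mul_div_cancel' hg0 hgfm
  ext f
  rw [Set.mem_setOf_eq, Prod.mk_eq_zero, iota_eq_zero_iff m hmpos]
  set F := rep2 m f with hFdef
  have hf : mk2 m F = f := mk2_rep2 m hmpos f
  constructor
  · rintro ⟨h1, h2⟩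
    have h1' : fm m ∣ F * A := by
      rw [← mk2_eq_zero_iff m, map_mul, hf]; exact h1
    have h2' : fm m ∣ F * B := by
      rw [← mk2_eq_zero_iff m, map_mul, hf]; exact h2
    have hb1 := EuclideanDomain.gcd_eq_gcd_ab A (EuclideanDomain.gcd B (fm m))
    have hb2 := EuclideanDomain.gcd_eq_gcd_ab B (fm m)
    have hdvdFg : fm m ∣ F * g := by
      have hexp : F * g =
          (F * A) * EuclideanDomain.gcdA A (EuclideanDomain.gcd B (fm m))
          + (F * B) * (EuclideanDomain.gcdA B (fm m)
              * EuclideanDomain.gcdB A (EuclideanDomain.gcd B (fm m)))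
          + fm m * (F * (EuclideanDomain.gcdB B (fm m)
              * EuclideanDomain.gcdB A (EuclideanDomain.gcd B (fm m)))) := by
        rw [hgdef, hb1, hb2]; ring
      rw [hexp]
      exact dvd_add (dvd_add (h1'.mul_right _) (h2'.mul_right _)) (dvd_mul_right _ _)
    have hcancel : g * h ∣ g * F := by
      rw [hfm_eq, mul_comm g F]; exact hdvdFg
    have hdvF : h ∣ F := (mul_dvd_mul_iff_left hg0).mp hcancel
    rw [SetLike.mem_coe, Ideal.mem_span_singleton]
    obtain ⟨c, hc⟩ := hdvF
    exact ⟨mk2 m c, by rw [← hf, hc, map_mul]⟩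
  · intro hmem
    rw [SetLike.mem_coe, Ideal.mem_span_singleton] at hmem
    obtain ⟨c, hc⟩ := hmem
    obtain ⟨c', hc'⟩ := Ideal.Quotient.mk_surjective (I := Ideal.span {fm m}) c
    have hf' : f = mk2 m (h * c') := by
      rw [map_mul, show mk2 m c' = c from hc']; exact hc
    have hA : fm m ∣ (h * c') * A := by
      obtain ⟨a', ha⟩ := hgA
      exact ⟨c' * a', by rw [← hfm_eq, ha]; ring⟩
    have hB' : fm m ∣ (h * c') * B := by
      obtain ⟨b', hb⟩ := hgB
      exact ⟨c' * b', by rw [← hfm_eq, hb]; ring⟩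
    constructor
    · rw [hf', ← map_mul, mk2_eq_zero_iff]; exact hA
    · rw [hf', ← map_mul, mk2_eq_zero_iff]; exact hB'

end
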